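/- Let U be a vector superspace with homogeneous basis {u_i}, V(U) the superalgebra of differential polynomials in the u_i, and suppose a λ-bracket on V(U) is given via the master formula from values {u_i λ u_j}. Then the λ-bracket satisfies the skew-symmetry axiom {a λ b} = -(-1)^{|a||b|}{b_{-λ-∂} a} for all a, b ∈ V(U) if and only if {u_i λ u_j} = -(-1)^{|u_i||u_j|}{u_j_{-λ-∂} u_i} holds for all basis elements u_i, u_j. -/

import Mathlib

noncomputable section

/-- A differential superalgebra: a `ℤ/2`-graded associative unital `ℂ`-algebra,
supercommutative, with an even derivation `D`. -/
class DiffSuperAlg (V : Type*) extends Ring V, Algebra ℂ V where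
  grading : ZMod 2 → Submodule ℂ V
  gradedAlgebra : GradedAlgebra grading
  D : V → V
  superComm : ∀ (i j : ZMod 2), ∀ a ∈ grading i, ∀ b ∈ grading j,
      a * b = ((-1 : ℂ) ^ (i.val * j.val)) • (b * a)
  D_add : ∀ a b, D (a + b) = D a + D b
  D_smul : ∀ (c : ℂ) (a : V), D (c • a) = c • D a
  D_mul : ∀ a b, D (a * b) = D a * b + a * D b
  D_even : ∀ (i : ZMod 2), ∀ a ∈ grading i, D a ∈ grading i

namespace PDO

variable {V : Type*} [DiffSuperAlg V]

/-- Iterated derivation `∂ⁿ`. -/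
def Dit (n : ℕ) : V → V := (DiffSuperAlg.D (V := V))^[n]

/-- Generalized binomial coefficient `C(k, n)` for `k ∈ ℤ`. -/
def cchoose (k : ℤ) (n : ℕ) : ℂ :=
  (∏ i ∈ Finset.range n, ((k : ℂ) - (i : ℂ))) / (n.factorial : ℂ)

/-- Sign `(-1)^x` of a parity `x ∈ ℤ/2`. -/
def sgn (x : ZMod 2) : ℂ := (-1 : ℂ) ^ x.val

/-- A formal series `Σₖ (f k) ∂ᵏ` is an honest pseudo-differential operator when its
support is bounded above. -/
def IsPDO (f : ℤ → V) : Prop := ∃ N : ℤ, ∀ k : ℤ, N < k → f k = 0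

/-- `f` is monic of order `N`. -/
def IsMonic (f : ℤ → V) (N : ℤ) : Prop :=
  f N = 1 ∧ ∀ k : ℤ, N < k → f k = 0

/-- `f` is a differential operator of order at most `N`. -/
def IsDiffOpLE (f : ℤ → V) (N : ℕ) : Prop := ∀ k : ℤ, f k ≠ 0 → 0 ≤ k ∧ k ≤ (N : ℤ)

/-- All coefficients of `f` are homogeneous of parity `π`. -/
def IsHomog (f : ℤ → V) (π : ZMod 2) : Prop :=
  ∀ k : ℤ, f k ∈ DiffSuperAlg.grading (V := V) π

/-- The product of pseudo-differential operators, obtained from the rule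
`∂ᵏ v = Σₙ C(k,n) v⁽ⁿ⁾ ∂^(k-n)`. -/
def pmul (f g : ℤ → V) : ℤ → V := fun m =>
  ∑ᶠ (k : ℤ) (j : ℤ) (n : ℕ),
    if m = k + j - (n : ℤ) then cchoose k n • (f k * Dit n (g j)) else 0

/-- The identity operator. -/
def one : ℤ → V := fun m => if m = 0 then 1 else 0

/-- The operator `∂^e`. -/
def del (e : ℤ) : ℤ → V := fun m => if m = e then 1 else 0

/-- The adjoint `A*(∂) = Σₖ (-∂)ᵏ aₖ`, coefficientwise. -/
def adj (f : ℤ → V) : ℤ → V := fun m =>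
  ∑ᶠ n : ℕ, ((-1 : ℂ) ^ (m + (n : ℤ)) * cchoose (m + n) n) • Dit n (f (m + n))

/-- The residue `Res A = a₋₁`. -/
def res (f : ℤ → V) : V := f (-1)

/-- The differential part `A₊`. -/
def dplus (f : ℤ → V) : ℤ → V := fun k => if 0 ≤ k then f k else 0

/-- Coefficient of `z^m` in `A(z+∂)(B(z))`, where `(z+∂)⁻¹` is expanded as
`Σₙ (-1)ⁿ z^(-n-1) ∂ⁿ` (i.e. via the generalized binomial coefficients). -/
def symbolSub (f g : ℤ → V) : ℤ → V := fun m =>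
  ∑ᶠ (k : ℤ) (n : ℕ), cchoose k n • (f k * Dit n (g (m - k + n)))

/-- Coefficientwise derivation on `V[λ]`. -/
def Dp (P : Polynomial V) : Polynomial V :=
  P.sum fun n c => Polynomial.C (DiffSuperAlg.D c) * Polynomial.X ^ n

/-- Iterated coefficientwise derivation on `V[λ]`. -/
def DpIt (n : ℕ) : Polynomial V → Polynomial V := (Dp (V := V))^[n]

/-- Coefficient of `w^j` in `(w+λ+∂)ⁿ (G(w))`, where `G(w) = Σ_q g_q w^q`. -/
def expW (n : ℕ) (g : ℤ → V) (j : ℤ) : Polynomial V :=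
  ∑ᶠ (m : ℕ) (α : ℕ), if m + α ≤ n then
    (((n.choose m) * ((n - m).choose α) : ℕ) : ℂ) •
      ((Polynomial.X : Polynomial V) ^ (n - m - α) * Polynomial.C (Dit m (g (j - (α : ℤ)))))
  else 0

/-- Coefficient of `z^i w^j` in `A(z) ι_z(z-w-λ-∂)⁻¹ (B(w))`. -/
def iotaTermB (f g : ℤ → V) (i j : ℤ) : Polynomial V :=
  ∑ᶠ n : ℕ, Polynomial.C (f (i + n + 1)) * expW n g j

/-- `A(w+λ+∂)` applied to `P ∈ V[λ]`: coefficient of `w^j`. -/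
def appW (f : ℤ → V) (P : Polynomial V) (j : ℤ) : Polynomial V :=
  ∑ᶠ (n : ℕ) (β : ℕ),
    (cchoose (j + n + β) n * cchoose (j + β) β) •
      ((Polynomial.X : Polynomial V) ^ β * (Polynomial.C (f (j + n + β)) * DpIt n P))

/-- Symbol of the adjoint `A*` at `λ - z` (expanded for large `|z|`):
coefficient of `z^i`, as an element of `V[λ]`. -/
def adjSymb (g : ℤ → V) (i : ℤ) : Polynomial V :=
  ∑ᶠ β : ℕ, ((-1 : ℂ) ^ i * cchoose (i + β) β) •
    ((Polynomial.X : Polynomial V) ^ β * Polynomial.C (adj g (i + β)))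

/-- Coefficient of `z^i w^j` in `A(w+λ+∂) ι_z(z-w-λ-∂)⁻¹ ((B)*(λ-z))`. -/
def iotaTermA (f g : ℤ → V) (i j : ℤ) : Polynomial V :=
  ∑ᶠ n : ℕ, appW (fun k => f (k - n)) (adjSymb g (i + n + 1)) j

/-- Coefficient of `z^i w^j` of the right-hand side
`A(w+λ+∂) ι_z(z-w-λ-∂)⁻¹ (B*)(λ-z) - A(z) ι_z(z-w-λ-∂)⁻¹ B(w)`
of the super Adler identity, for the entries `f = A_{hj}` and `g = A_{ik}`. -/
def adlerRHS (f g : ℤ → V) (i j : ℤ) : Polynomial V :=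
  iotaTermA f g i j - iotaTermB f g i j

/-- Coefficient of `w^j` in `A(w+λ)`. -/
def symbLam (f : ℤ → V) (j : ℤ) : Polynomial V :=
  ∑ᶠ β : ℕ, cchoose (j + β) β •
    ((Polynomial.X : Polynomial V) ^ β * Polynomial.C (f (j + β)))

variable {I : Type*} [Fintype I] [DecidableEq I]

/-- The super Adler-type operator property of a matrix pseudo-differential operator,
with respect to a λ-bracket `Br` and the parity function `p` on the index set. -/
def IsSATO (p : I → ZMod 2) (Br : V → V → Polynomial V) (A : I → I → ℤ → V) : Prop :=
  ∀ i j h k : I, ∀ zp wp : ℤ,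
    Br (A i j zp) (A h k wp) =
      sgn (p i * p j + p i * p h + p j * p h) • adlerRHS (A h j) (A i k) zp wp

/-- Homogeneous component of parity `π` of an element of `V`. -/
def gpart (π : ZMod 2) (v : V) : V :=
  letI := DiffSuperAlg.gradedAlgebra (V := V)
  ((DirectSum.decompose (DiffSuperAlg.grading (V := V)) v) π : V)

/-- The `∘`-product `(a⊗v)∘(b⊗w) = (-1)^(|b||v|) ab⊗vw` on matrix pseudo-differential
operators. -/
def circMul (p : I → ZMod 2) (M N : I → I → ℤ → V) : I → I → ℤ → V :=
  fun i j m => ∑ t : I, ∑ π : ZMod 2,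
    sgn ((p t + p j) * π) • pmul (fun k => gpart π (M i t k)) (N t j) m

/-- The `⋆`-product `(a⊗v)⋆(b⊗w) = (-1)^(|b||v|+|a||b|) ab⊗vw` on matrix
pseudo-differential operators. -/
def starMul (p : I → ZMod 2) (M N : I → I → ℤ → V) : I → I → ℤ → V :=
  fun i j m => ∑ t : I, ∑ π : ZMod 2,
    sgn ((p t + p j) * π + (p i + p t) * (p t + p j)) •
      pmul (fun k => gpart π (M i t k)) (N t j) m

/-- The identity matrix operator `𝟙_I`. -/
def idMat : I → I → ℤ → V := fun i j m => if i = j ∧ m = 0 then 1 else 0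

/-- `M` is a monic matrix (pseudo-)differential operator of order `N`. -/
def IsMonicMat (M : I → I → ℤ → V) (N : ℤ) : Prop :=
  (∀ i j : I, M i j N = if i = j then (1 : V) else 0) ∧
  (∀ i j : I, ∀ k : ℤ, N < k → M i j k = 0)

/-- `∘`-powers of a matrix pseudo-differential operator. -/
def circPow (p : I → ZMod 2) (M : I → I → ℤ → V) : ℕ → I → I → ℤ → V
  | 0 => idMat
  | n + 1 => circMul p M (circPow p M n)

/-- Matrix-wise differential part. -/
def dplusMat (M : I → I → ℤ → V) : I → I → ℤ → V := fun i j => dplus (M i j)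

/-- `Res str M`, the supertrace of the residue. -/
def strRes (p : I → ZMod 2) (M : I → I → ℤ → V) : V :=
  ∑ i : I, sgn (p i) • res (M i i)

/-- `{a_(λ+∂) c}_→ b`, i.e. `Σₙ (a₍ₙ₎c) (λ+∂)ⁿ b` for `P = {a_λ c}`. -/
def lamShift (P : Polynomial V) (b : V) : Polynomial V :=
  ∑ᶠ (n : ℕ) (m : ℕ), if m ≤ n then ((n.choose m : ℕ) : ℂ) •
    ((Polynomial.X : Polynomial V) ^ (n - m) * Polynomial.C (P.coeff n * Dit m b)) else 0

/-- `{b_(-λ-∂) a}` computed from `P = {b_λ a}`. -/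
def negLam (P : Polynomial V) : Polynomial V :=
  ∑ᶠ (n : ℕ) (m : ℕ), if m ≤ n then (((n.choose m : ℕ) : ℂ) * (-1 : ℂ) ^ n) •
    ((Polynomial.X : Polynomial V) ^ (n - m) * Polynomial.C (Dit m (P.coeff n))) else 0

end PDO

/-- A λ-bracket on a differential superalgebra: even, bilinear, sesquilinear,
satisfying the left and right Leibniz rules. -/
structure LambdaBracket (V : Type*) [DiffSuperAlg V] where
  br : V → V → Polynomial V
  add_left : ∀ a b c : V, br (a + b) c = br a c + br b c
  add_right : ∀ a b c : V, br a (b + c) = br a b + br a c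
  smul_left : ∀ (r : ℂ) (a b : V), br (r • a) b = r • br a b
  smul_right : ∀ (r : ℂ) (a b : V), br a (r • b) = r • br a b
  even : ∀ (i j : ZMod 2), ∀ a ∈ DiffSuperAlg.grading (V := V) i,
      ∀ b ∈ DiffSuperAlg.grading (V := V) j, ∀ n : ℕ,
      (br a b).coeff n ∈ DiffSuperAlg.grading (V := V) (i + j)
  sesq_left : ∀ a b : V, br (DiffSuperAlg.D a) b = -(Polynomial.X * br a b)
  sesq_right : ∀ a b : V,
      br a (DiffSuperAlg.D b) = Polynomial.X * br a b + PDO.Dp (br a b)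
  leibniz_left : ∀ (i j : ZMod 2), ∀ a ∈ DiffSuperAlg.grading (V := V) i,
      ∀ b ∈ DiffSuperAlg.grading (V := V) j, ∀ c : V,
      br a (b * c) = br a b * Polynomial.C c + PDO.sgn (i * j) • (Polynomial.C b * br a c)
  leibniz_right : ∀ (i j k : ZMod 2), ∀ a ∈ DiffSuperAlg.grading (V := V) i,
      ∀ b ∈ DiffSuperAlg.grading (V := V) j, ∀ c ∈ DiffSuperAlg.grading (V := V) k,
      br (a * b) c =
        PDO.sgn (j * k) • PDO.lamShift (br a c) b +
        PDO.sgn (i * (j + k)) • PDO.lamShift (br b c) a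

namespace PDO

variable {V : Type*} [DiffSuperAlg V]

/-- Skew-symmetry axiom: `{a_λ b} = -(-1)^(|a||b|) {b_(-λ-∂) a}`. -/
def SkewSymm (B : LambdaBracket V) : Prop :=
  ∀ (i j : ZMod 2), ∀ a ∈ DiffSuperAlg.grading (V := V) i,
    ∀ b ∈ DiffSuperAlg.grading (V := V) j,
    B.br a b = -(sgn (i * j) • negLam (B.br b a))

/-- Coefficient of `λ^l μ^m` in `{{a_λ b}_(λ+μ) c}`. -/
def jacComp (B : LambdaBracket V) (a b c : V) (l m : ℕ) : V :=
  ∑ᶠ n : ℕ, if n ≤ l then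
    (((l - n + m).choose m : ℕ) : ℂ) • (B.br ((B.br a b).coeff n) c).coeff (l - n + m)
  else 0

/-- Jacobi identity: `{a_λ {b_μ c}} = {{a_λ b}_(λ+μ) c} + (-1)^(|a||b|) {b_μ {a_λ c}}`,
written on the coefficient of `λ^l μ^m`. -/
def Jacobi (B : LambdaBracket V) : Prop :=
  ∀ (i j : ZMod 2), ∀ a ∈ DiffSuperAlg.grading (V := V) i,
    ∀ b ∈ DiffSuperAlg.grading (V := V) j, ∀ c : V, ∀ l m : ℕ,
    (B.br a ((B.br b c).coeff m)).coeff l =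
      jacComp B a b c l m + sgn (i * j) • (B.br b ((B.br a c).coeff l)).coeff m

/-- The family `u` differentially generates `V`. -/
def diffGen (u : Set V) : Prop :=
  Algebra.adjoin ℂ {x : V | ∃ v ∈ u, ∃ n : ℕ, x = Dit n v} = ⊤

end PDO
namespace SkewAux

open Polynomial PDO

variable {V : Type*} [DiffSuperAlg V]

local notation "DD" => DiffSuperAlg.D (V := V)

lemma D_zero : DD (0 : V) = 0 := by
  have := DiffSuperAlg.D_smul (V := V) 0 0
  simpa using this

lemma D_one : DD (1 : V) = 0 := by
  have h := DiffSuperAlg.D_mul (V := V) 1 1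
  rw [mul_one, one_mul, mul_one] at h
  have h2 : DD (1 : V) + DD (1:V) = DD (1:V) + 0 := by
    rw [add_zero]; exact h.symm
  exact (add_left_cancel h2)

lemma Dit_zero_apply (x : V) : Dit 0 x = x := rfl

lemma Dit_succ (n : ℕ) (x : V) : Dit (n+1) x = Dit n (DD x) :=
  Function.iterate_succ_apply _ _ _

lemma Dit_succ' (n : ℕ) (x : V) : Dit (n+1) x = DD (Dit n x) :=
  Function.iterate_succ_apply' _ _ _

lemma Dit_zero (n : ℕ) : Dit n (0 : V) = 0 := by
  induction n with
  | zero => rfl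
  | succ n ih => rw [Dit_succ', ih, D_zero]

lemma Dit_add (n : ℕ) (x y : V) : Dit n (x + y) = Dit n x + Dit n y := by
  induction n with
  | zero => rfl
  | succ n ih => rw [Dit_succ', Dit_succ', Dit_succ', ih, DiffSuperAlg.D_add]

lemma Dit_smul (n : ℕ) (c : ℂ) (x : V) : Dit n (c • x) = c • Dit n x := by
  induction n with
  | zero => rfl
  | succ n ih => rw [Dit_succ', Dit_succ', ih, DiffSuperAlg.D_smul]

lemma Dit_mem (n : ℕ) (π : ZMod 2) (x : V) (hx : x ∈ DiffSuperAlg.grading (V := V) π) :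
    Dit n x ∈ DiffSuperAlg.grading (V := V) π := by
  induction n with
  | zero => exact hx
  | succ n ih => rw [Dit_succ']; exact DiffSuperAlg.D_even _ _ ih

/-- `D` as an additive homomorphism. -/
def Dhom : V →+ V := AddMonoidHom.mk' DD (DiffSuperAlg.D_add)

lemma Dhom_apply (x : V) : Dhom x = DD x := rfl

lemma Dp_coeff (P : Polynomial V) (k : ℕ) : (Dp P).coeff k = DD (P.coeff k) := by
  rw [Dp, Polynomial.sum_def, finset_sum_coeff]
  simp only [coeff_C_mul, coeff_X_pow, mul_ite, mul_one, mul_zero]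
  rw [Finset.sum_ite_eq P.support k (fun n => DD (P.coeff n))]
  by_cases h : k ∈ P.support
  · rw [if_pos h]
  · rw [if_neg h]
    rw [Polynomial.notMem_support_iff.mp h, D_zero]

lemma Dp_add (P Q : Polynomial V) : Dp (P + Q) = Dp P + Dp Q := by
  ext k
  simp [Dp_coeff, DiffSuperAlg.D_add]

lemma Dp_smul (c : ℂ) (P : Polynomial V) : Dp (c • P) = c • Dp P := by
  ext k
  simp [Dp_coeff, DiffSuperAlg.D_smul]

lemma Dp_neg (P : Polynomial V) : Dp (-P) = -Dp P := by
  have h := Dp_smul (-1 : ℂ) P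
  simpa using h

lemma Dp_C (a : V) : Dp (C a) = C (DD a) := by
  ext k
  rw [Dp_coeff]
  rcases k with _ | k
  · simp
  · simp [D_zero]

lemma Dp_zero : Dp (0 : Polynomial V) = 0 := by
  ext k; simp [Dp_coeff, D_zero]

lemma Dp_mul (P Q : Polynomial V) : Dp (P * Q) = Dp P * Q + P * Dp Q := by
  ext k
  rw [coeff_add, Dp_coeff, coeff_mul, coeff_mul, coeff_mul, ← Dhom_apply,
    map_sum, ← Finset.sum_add_distrib]
  apply Finset.sum_congr rfl
  intro x _
  rw [Dhom_apply, DiffSuperAlg.D_mul, Dp_coeff, Dp_coeff]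

/-- coefficientwise derivation as an endomorphism -/
def DE : Module.End ℂ (Polynomial V) :=
  { toFun := Dp
    map_add' := Dp_add
    map_smul' := Dp_smul }

/-- multiplication by `X` as an endomorphism -/
def ME : Module.End ℂ (Polynomial V) :=
  { toFun := fun Q => X * Q
    map_add' := fun P Q => mul_add X P Q
    map_smul' := fun c Q => mul_smul_comm c X Q }

lemma DE_apply (Q : Polynomial V) : DE Q = Dp Q := rfl
lemma ME_apply (Q : Polynomial V) : ME Q = X * Q := rfl

/-- the operator `λ + ∂` -/
def AE : Module.End ℂ (Polynomial V) := ME + DE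

lemma AE_apply (Q : Polynomial V) : AE Q = X * Q + Dp Q := rfl

lemma ME_DE_commute : Commute (ME (V := V)) DE := by
  show ME * DE = DE * ME
  apply LinearMap.ext
  intro Q
  rw [Module.End.mul_apply, Module.End.mul_apply, DE_apply, ME_apply, DE_apply, ME_apply]
  ext k
  rcases k with _ | k
  · rw [mul_coeff_zero, coeff_X_zero, zero_mul, Dp_coeff, mul_coeff_zero, coeff_X_zero,
      zero_mul, D_zero]
  · rw [coeff_X_mul, Dp_coeff, Dp_coeff, coeff_X_mul]

lemma AE_DE_commute : Commute (AE (V := V)) DE := by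
  show AE (V := V) * DE = DE * AE
  rw [AE, add_mul, mul_add, (ME_DE_commute).eq]

lemma ME_pow_apply (k : ℕ) (Q : Polynomial V) : (ME ^ k) Q = X ^ k * Q := by
  induction k with
  | zero => rw [pow_zero, pow_zero, one_mul, Module.End.one_apply]
  | succ k ih =>
    rw [pow_succ', Module.End.mul_apply, ih, ME_apply, ← mul_assoc, ← pow_succ']

lemma DE_pow_C (m : ℕ) (a : V) : ((DE ^ m) (C a) : Polynomial V) = C (Dit m a) := by
  induction m with
  | zero => rw [pow_zero, Module.End.one_apply, Dit_zero_apply]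
  | succ m ih =>
    rw [pow_succ', Module.End.mul_apply, DE_apply, ih, Dp_C, ← Dit_succ']

end SkewAux
namespace SkewAux

open Polynomial PDO Finset

variable {V : Type*} [DiffSuperAlg V]

local notation "DD" => DiffSuperAlg.D (V := V)

lemma AE_pow_C (n : ℕ) (a : V) :
    ((AE ^ n) (C a) : Polynomial V) =
      ∑ m ∈ Finset.range (n+1), ((n.choose m : ℕ) : ℂ) • ((X : Polynomial V) ^ (n-m) * C (Dit m a)) := by
  have h := (ME_DE_commute (V := V)).add_pow n
  rw [AE, h, LinearMap.sum_apply, ← Finset.sum_range_reflect]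
  apply Finset.sum_congr rfl
  intro m hm
  simp only [Nat.add_sub_cancel]
  have hmn : m ≤ n := by
    have := Finset.mem_range.mp hm; omega
  have h3 : n - (n - m) = m := by omega
  rw [Module.End.mul_apply, Module.End.mul_apply, Module.End.natCast_apply, h3,
    Nat.choose_symm hmn, ← Nat.cast_smul_eq_nsmul ℂ, map_smul, map_smul, DE_pow_C,
    ME_pow_apply]

lemma negLam_eq (P : Polynomial V) (N : ℕ) (hN : ∀ n, N ≤ n → P.coeff n = 0) :
    negLam P = ∑ n ∈ Finset.range N, ((-1 : ℂ) ^ n) • ((AE ^ n) (C (P.coeff n)) : Polynomial V) := by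
  rw [negLam]
  have inner : ∀ n : ℕ,
      (∑ᶠ m : ℕ, if m ≤ n then (((n.choose m : ℕ) : ℂ) * (-1 : ℂ) ^ n) •
        ((X : Polynomial V) ^ (n - m) * C (Dit m (P.coeff n))) else 0) =
      ((-1 : ℂ) ^ n) • ((AE ^ n) (C (P.coeff n)) : Polynomial V) := by
    intro n
    rw [finsum_eq_sum_of_support_subset _ (s := Finset.range (n+1)) ?hsub]
    case hsub =>
      intro m hm
      simp only [Function.mem_support] at hm
      simp only [Finset.coe_range, Set.mem_Iio]
      by_contra hc
      push_neg at hc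
      exact hm (if_neg (by omega))
    rw [AE_pow_C, Finset.smul_sum]
    apply Finset.sum_congr rfl
    intro m hm
    rw [if_pos (by have := Finset.mem_range.mp hm; omega : m ≤ n),
      mul_comm (((n.choose m : ℕ)) : ℂ), ← smul_smul]
  rw [finsum_congr inner]
  apply finsum_eq_sum_of_support_subset
  intro n hn
  simp only [Function.mem_support] at hn
  simp only [Finset.coe_range, Set.mem_Iio]
  by_contra hc
  push_neg at hc
  apply hn
  rw [hN n hc, map_zero, map_zero, smul_zero]

/-- `lamShift` with a polynomial second argument. -/
def LS (P Q : Polynomial V) : Polynomial V := ∑ᶠ n : ℕ, C (P.coeff n) * ((AE ^ n) Q : Polynomial V)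

lemma LS_eq (P Q : Polynomial V) (N : ℕ) (hN : ∀ n, N ≤ n → P.coeff n = 0) :
    LS P Q = ∑ n ∈ Finset.range N, C (P.coeff n) * ((AE ^ n) Q : Polynomial V) := by
  apply finsum_eq_sum_of_support_subset
  intro n hn
  simp only [Function.mem_support] at hn
  simp only [Finset.coe_range, Set.mem_Iio]
  by_contra hc
  push_neg at hc
  apply hn
  rw [hN n hc, map_zero, zero_mul]

lemma lamShift_eq_LS (P : Polynomial V) (b : V) : lamShift P b = LS P (C b) := by
  rw [lamShift, LS]
  apply finsum_congr
  intro n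
  rw [finsum_eq_sum_of_support_subset _ (s := Finset.range (n+1)) ?hsub]
  case hsub =>
    intro m hm
    simp only [Function.mem_support] at hm
    simp only [Finset.coe_range, Set.mem_Iio]
    by_contra hc
    push_neg at hc
    exact hm (if_neg (by omega))
  rw [AE_pow_C, Finset.mul_sum]
  apply Finset.sum_congr rfl
  intro m hm
  rw [if_pos (by have := Finset.mem_range.mp hm; omega : m ≤ n)]
  rw [mul_smul_comm, ← mul_assoc, ← X_pow_mul, mul_assoc, ← C_mul]

lemma coeff_bound (P : Polynomial V) : ∀ n, P.natDegree + 1 ≤ n → P.coeff n = 0 :=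
  fun n h => P.coeff_eq_zero_of_natDegree_lt (by omega)

lemma negLam_zero : negLam (0 : Polynomial V) = 0 := by
  rw [negLam_eq 0 0 (fun n _ => coeff_zero n), Finset.range_zero, Finset.sum_empty]

lemma negLam_C (a : V) : negLam (C a) = C a := by
  rw [negLam_eq (C a) 1 (fun n hn => by
    rw [coeff_C, if_neg (by omega)])]
  rw [Finset.sum_range_one, pow_zero, one_smul, pow_zero, Module.End.one_apply, coeff_C,
    if_pos rfl]

lemma negLam_add (P Q : Polynomial V) : negLam (P + Q) = negLam P + negLam Q := by
  set N := max P.natDegree Q.natDegree + 1 with hNdef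
  have hP : ∀ n, N ≤ n → P.coeff n = 0 := fun n h => coeff_bound P n (by omega)
  have hQ : ∀ n, N ≤ n → Q.coeff n = 0 := fun n h => coeff_bound Q n (by omega)
  have hPQ : ∀ n, N ≤ n → (P + Q).coeff n = 0 := fun n h => by
    rw [coeff_add, hP n h, hQ n h, add_zero]
  rw [negLam_eq P N hP, negLam_eq Q N hQ, negLam_eq (P + Q) N hPQ, ← Finset.sum_add_distrib]
  apply Finset.sum_congr rfl
  intro n _
  rw [coeff_add, map_add, map_add, smul_add]

lemma negLam_smul (c : ℂ) (P : Polynomial V) : negLam (c • P) = c • negLam P := by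
  have hP := coeff_bound P
  have hcP : ∀ n, P.natDegree + 1 ≤ n → (c • P).coeff n = 0 := fun n h => by
    rw [coeff_smul, hP n h, smul_zero]
  rw [negLam_eq P _ hP, negLam_eq (c • P) _ hcP, Finset.smul_sum]
  apply Finset.sum_congr rfl
  intro n _
  rw [coeff_smul, ← smul_C, map_smul, smul_comm]

lemma negLam_neg (P : Polynomial V) : negLam (-P) = -negLam P := by
  have h := negLam_smul (-1 : ℂ) P
  simpa using h

lemma negLam_X_mul (P : Polynomial V) : negLam (X * P) = -(X * negLam P + Dp (negLam P)) := by
  set N := P.natDegree + 1 with hNdef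
  have hP := coeff_bound P
  have hXP : ∀ n, N + 1 ≤ n → (X * P).coeff n = 0 := by
    intro n hn
    rcases n with _ | n
    · omega
    · rw [coeff_X_mul]; exact hP n (by omega)
  rw [negLam_eq (X * P) (N + 1) hXP, Finset.sum_range_succ']
  have h0 : ((-1 : ℂ) ^ 0) • ((AE ^ 0) (C ((X * P).coeff 0)) : Polynomial V) = 0 := by
    rw [mul_coeff_zero, coeff_X_zero, zero_mul, map_zero, map_zero, smul_zero]
  rw [h0, add_zero]
  have hstep : ∀ n ∈ Finset.range N,
      ((-1 : ℂ) ^ (n + 1)) • ((AE ^ (n + 1)) (C ((X * P).coeff (n + 1))) : Polynomial V) =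
      -(AE (((-1 : ℂ) ^ n) • ((AE ^ n) (C (P.coeff n)) : Polynomial V)) : Polynomial V) := by
    intro n _
    rw [coeff_X_mul, pow_succ' (AE (V := V)) n, Module.End.mul_apply, map_smul, pow_succ,
      mul_smul, neg_one_smul, smul_neg]
  rw [Finset.sum_congr rfl hstep, Finset.sum_neg_distrib, ← map_sum, ← negLam_eq P N hP,
    AE_apply]

end SkewAux
namespace SkewAux

open Polynomial PDO Finset

variable {V : Type*} [DiffSuperAlg V]

local notation "DD" => DiffSuperAlg.D (V := V)

lemma poly_ind {Φ : Polynomial V → Prop} (hC : ∀ a : V, Φ (C a))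
    (hadd : ∀ P Q : Polynomial V, Φ P → Φ Q → Φ (P + Q))
    (hX : ∀ P : Polynomial V, Φ P → Φ (X * P)) (P : Polynomial V) : Φ P := by
  induction P using Polynomial.induction_on' with
  | add p q hp hq => exact hadd _ _ hp hq
  | monomial n a =>
      induction n with
      | zero => simpa using hC a
      | succ n ih =>
          rw [← Polynomial.X_mul_monomial]
          exact hX _ ih

lemma Dp_bound (P : Polynomial V) : ∀ n, P.natDegree + 1 ≤ n → (Dp P).coeff n = 0 := by
  intro n hn
  rw [Dp_coeff, coeff_bound P n hn, D_zero]

lemma negLam_Dp (P : Polynomial V) : negLam (Dp P) = Dp (negLam P) := by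
  set N := P.natDegree + 1
  have hP := coeff_bound P
  have key : ∀ n : ℕ, ((AE ^ n) (C (DD (P.coeff n))) : Polynomial V) =
      Dp ((AE ^ n) (C (P.coeff n)) : Polynomial V) := by
    intro n
    have h := congrArg (fun f : Module.End ℂ (Polynomial V) => f (C (P.coeff n)))
      ((AE_DE_commute (V := V)).pow_left n).eq
    simp only [Module.End.mul_apply] at h
    rw [DE_apply, DE_apply, Dp_C] at h
    exact h
  calc negLam (Dp P)
      = ∑ n ∈ Finset.range N, ((-1 : ℂ) ^ n) • ((AE ^ n) (C ((Dp P).coeff n)) : Polynomial V) :=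
        negLam_eq _ N (Dp_bound P)
    _ = ∑ n ∈ Finset.range N, ((-1 : ℂ) ^ n) • (DE ((AE ^ n) (C (P.coeff n)) : Polynomial V)) := by
        apply Finset.sum_congr rfl
        intro n _
        rw [Dp_coeff, key n, DE_apply]
    _ = DE (∑ n ∈ Finset.range N, ((-1 : ℂ) ^ n) • ((AE ^ n) (C (P.coeff n)) : Polynomial V)) := by
        rw [map_sum]
        apply Finset.sum_congr rfl
        intro n _
        rw [map_smul]
    _ = Dp (negLam P) := by rw [negLam_eq P N hP, DE_apply]

lemma negLam_negLam (P : Polynomial V) : negLam (negLam P) = P := by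
  induction P using poly_ind with
  | hC a => rw [negLam_C, negLam_C]
  | hadd P Q hP hQ => rw [negLam_add, negLam_add, hP, hQ]
  | hX P hP =>
      rw [negLam_X_mul, negLam_neg, negLam_add, negLam_X_mul, negLam_Dp, neg_add, neg_neg,
        add_assoc, add_neg_cancel, add_zero, hP]

lemma LS_C (a : V) (Q : Polynomial V) : LS (C a) Q = C a * Q := by
  rw [LS_eq (C a) Q 1 (fun n hn => by rw [coeff_C, if_neg (by omega)])]
  rw [Finset.sum_range_one, pow_zero, Module.End.one_apply, coeff_C, if_pos rfl]

lemma LS_add_left (P P' Q : Polynomial V) : LS (P + P') Q = LS P Q + LS P' Q := by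
  set N := max P.natDegree P'.natDegree + 1
  have hP : ∀ n, N ≤ n → P.coeff n = 0 := fun n h => coeff_bound P n (by omega)
  have hP' : ∀ n, N ≤ n → P'.coeff n = 0 := fun n h => coeff_bound P' n (by omega)
  have hPP' : ∀ n, N ≤ n → (P + P').coeff n = 0 := fun n h => by
    rw [coeff_add, hP n h, hP' n h, add_zero]
  rw [LS_eq P Q N hP, LS_eq P' Q N hP', LS_eq (P + P') Q N hPP', ← Finset.sum_add_distrib]
  apply Finset.sum_congr rfl
  intro n _
  rw [coeff_add, C_add, add_mul]

lemma LS_smul_left (c : ℂ) (P Q : Polynomial V) : LS (c • P) Q = c • LS P Q := by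
  have hP := coeff_bound P
  have hcP : ∀ n, P.natDegree + 1 ≤ n → (c • P).coeff n = 0 := fun n h => by
    rw [coeff_smul, hP n h, smul_zero]
  rw [LS_eq P Q _ hP, LS_eq (c • P) Q _ hcP, Finset.smul_sum]
  apply Finset.sum_congr rfl
  intro n _
  rw [coeff_smul, ← smul_C, smul_mul_assoc]

lemma LS_neg_left (P Q : Polynomial V) : LS (-P) Q = -LS P Q := by
  have h := LS_smul_left (-1 : ℂ) P Q
  simpa using h

lemma LS_X_mul (P Q : Polynomial V) : LS (X * P) Q = LS P (AE Q) := by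
  set N := P.natDegree + 1 with hNdef
  have hP := coeff_bound P
  have hXP : ∀ n, N + 1 ≤ n → (X * P).coeff n = 0 := by
    intro n hn
    rcases n with _ | n
    · omega
    · rw [coeff_X_mul]; exact hP n (by omega)
  rw [LS_eq (X * P) Q (N + 1) hXP, Finset.sum_range_succ']
  have h0 : C ((X * P).coeff 0) * ((AE ^ 0) Q : Polynomial V) = 0 := by
    rw [mul_coeff_zero, coeff_X_zero, zero_mul, map_zero, zero_mul]
  rw [h0, add_zero, LS_eq P (AE Q) N hP]
  apply Finset.sum_congr rfl
  intro n _
  rw [coeff_X_mul, pow_succ, Module.End.mul_apply]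

lemma LS_AE (P Q : Polynomial V) : AE (LS P Q) = LS (Dp P) Q + LS P (AE Q) := by
  set N := P.natDegree + 1
  have hP := coeff_bound P
  rw [LS_eq P Q N hP, LS_eq (Dp P) Q N (Dp_bound P), LS_eq P (AE Q) N hP, map_sum,
    ← Finset.sum_add_distrib]
  apply Finset.sum_congr rfl
  intro n _
  rw [AE_apply, Dp_mul, Dp_coeff, Dp_C]
  have hX : X * (C (P.coeff n) * ((AE ^ n) Q : Polynomial V)) =
      C (P.coeff n) * (X * ((AE ^ n) Q : Polynomial V)) := by
    rw [← mul_assoc, X_mul, mul_assoc]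
  have h2 : ((AE ^ n) (AE Q) : Polynomial V) = AE ((AE ^ n) Q : Polynomial V) := by
    rw [← Module.End.mul_apply, ← pow_succ, pow_succ', Module.End.mul_apply]
  rw [hX, h2, AE_apply, mul_add]
  abel

lemma negLam_mul_C (P : Polynomial V) (c : V) :
    negLam (P * C c) = LS (negLam P) (C c) := by
  induction P using poly_ind with
  | hC a => rw [← C_mul, negLam_C, negLam_C, LS_C, C_mul]
  | hadd P Q hP hQ => rw [add_mul, negLam_add, negLam_add, LS_add_left, hP, hQ]
  | hX P hP =>
      have hL : negLam (X * P * C c) =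
          -(LS (Dp (negLam P)) (C c) + LS (negLam P) (AE (C c))) := by
        rw [mul_assoc, negLam_X_mul, hP, ← AE_apply, LS_AE]
      have hR : LS (negLam (X * P)) (C c) =
          -(LS (negLam P) (AE (C c)) + LS (Dp (negLam P)) (C c)) := by
        rw [negLam_X_mul, LS_neg_left, LS_add_left, LS_X_mul]
      rw [hL, hR, add_comm (LS (Dp (negLam P)) (C c))]

lemma negLam_LS_negLam (Q : Polynomial V) (c : V) :
    negLam (LS (negLam Q) (C c)) = Q * C c := by
  rw [← negLam_mul_C, negLam_negLam]

lemma lamShift_I1 (Q : Polynomial V) (c : V) :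
    negLam (lamShift (negLam Q) c) = Q * C c := by
  rw [lamShift_eq_LS, negLam_LS_negLam]

end SkewAux
namespace SkewAux

open Polynomial PDO Finset

variable {V : Type*} [DiffSuperAlg V]

local notation "DD" => DiffSuperAlg.D (V := V)
local notation "G" => DiffSuperAlg.grading (V := V)

lemma lamShift_smul (c : ℂ) (P : Polynomial V) (b : V) :
    lamShift (c • P) b = c • lamShift P b := by
  rw [lamShift_eq_LS, lamShift_eq_LS, LS_smul_left]

lemma lamShift_neg (P : Polynomial V) (b : V) : lamShift (-P) b = -lamShift P b := by
  rw [lamShift_eq_LS, lamShift_eq_LS, LS_neg_left]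

lemma Dp_X_pow (n : ℕ) : Dp ((X : Polynomial V) ^ n) = 0 := by
  ext k
  rw [Dp_coeff, coeff_X_pow, coeff_zero]
  by_cases h : k = n
  · rw [if_pos h, D_one]
  · rw [if_neg h, D_zero]

lemma AE_pow_one (n : ℕ) : ((AE ^ n) (1 : Polynomial V) : Polynomial V) = X ^ n := by
  induction n with
  | zero => rw [pow_zero, Module.End.one_apply, pow_zero]
  | succ n ih =>
      rw [pow_succ' (AE (V := V)) n, Module.End.mul_apply, ih, AE_apply, Dp_X_pow, add_zero,
        ← pow_succ']

lemma LS_one (P : Polynomial V) : LS P (1 : Polynomial V) = P := by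
  rw [LS_eq P 1 _ (coeff_bound P)]
  ext k
  rw [finset_sum_coeff]
  have hterm : ∀ n, (C (P.coeff n) * ((AE ^ n) (1 : Polynomial V) : Polynomial V)).coeff k =
      if k = n then P.coeff n else 0 := by
    intro n
    rw [AE_pow_one, coeff_C_mul, coeff_X_pow, mul_ite, mul_one, mul_zero]
  rw [Finset.sum_congr rfl (fun n _ => hterm n), Finset.sum_ite_eq (Finset.range _) k]
  by_cases h : k ∈ Finset.range (P.natDegree + 1)
  · rw [if_pos h]
  · rw [if_neg h]
    exact (coeff_bound P k (by simpa using h)).symm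

lemma lamShift_one (P : Polynomial V) : lamShift P (1 : V) = P := by
  rw [lamShift_eq_LS, C_1, LS_one]

lemma zmod2_em (x : ZMod 2) : x = 0 ∨ x = 1 := by revert x; decide

lemma sgn_zero : sgn (0 : ZMod 2) = 1 := by
  rw [PDO.sgn, ZMod.val_zero, pow_zero]

lemma sgn_one : sgn (1 : ZMod 2) = -1 := by
  rw [PDO.sgn, ZMod.val_one, pow_one]

lemma sgn_mul_sgn (x y : ZMod 2) : sgn x * sgn y = sgn (x + y) := by
  rcases zmod2_em x with h | h <;> rcases zmod2_em y with h' | h' <;> subst h <;> subst h' <;>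
    simp [sgn_zero, sgn_one, show ((1 : ZMod 2) + 1) = 0 by decide]

lemma sgn_val_mul (x y : ZMod 2) : ((-1 : ℂ)) ^ (x.val * y.val) = sgn (x * y) := by
  rcases zmod2_em x with h | h <;> rcases zmod2_em y with h' | h' <;> subst h <;> subst h' <;>
    simp [sgn_zero, sgn_one, ZMod.val_zero, ZMod.val_one]

lemma add_self_zmod2 (z : ZMod 2) : z + z = 0 := by revert z; decide

lemma C_mul_comm_poly {j π : ZMod 2} {b : V} (hb : b ∈ G j) (Q : Polynomial V)
    (hQ : ∀ n, Q.coeff n ∈ G π) : C b * Q = sgn (j * π) • (Q * C b) := by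
  ext k
  rw [coeff_C_mul, coeff_smul, coeff_mul_C,
    DiffSuperAlg.superComm j π b hb (Q.coeff k) (hQ k)]
  congr 1
  exact sgn_val_mul j π

lemma one_mem_G : (1 : V) ∈ G (0 : ZMod 2) := by
  letI := DiffSuperAlg.gradedAlgebra (V := V)
  exact SetLike.one_mem_graded _

section Bracket

variable (B : LambdaBracket V)

lemma br_zero_right (a : V) : B.br a 0 = 0 := by
  have h := B.add_right a 0 0
  rw [add_zero] at h
  exact (left_eq_add.mp h)

lemma br_zero_left (a : V) : B.br 0 a = 0 := by
  have h := B.add_left 0 0 a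
  rw [add_zero] at h
  exact (left_eq_add.mp h)

lemma br_one_right {i : ZMod 2} {a : V} (ha : a ∈ G i) : B.br a 1 = 0 := by
  have h := B.leibniz_left i 0 a ha 1 one_mem_G 1
  rw [one_mul, C_1, mul_one, one_mul, mul_zero, sgn_zero, one_smul] at h
  exact (left_eq_add.mp h)

lemma br_one_left {k : ZMod 2} {a : V} (ha : a ∈ G k) : B.br 1 a = 0 := by
  have h := B.leibniz_right 0 0 k 1 one_mem_G 1 one_mem_G a ha
  rw [one_mul, lamShift_one, zero_mul, zero_mul, sgn_zero, one_smul] at h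
  exact (left_eq_add.mp h)

/-- The skew-symmetry relation for the pair `(a, b)` of respective parities `(i, j)`. -/
def SP (i j : ZMod 2) (a b : V) : Prop :=
  B.br a b = -(PDO.sgn (i * j) • PDO.negLam (B.br b a))

lemma SP_symm {i j : ZMod 2} {a b : V} (h : SP B i j a b) : SP B j i b a := by
  unfold SP at h ⊢
  have h2 := congrArg PDO.negLam h
  rw [negLam_neg, negLam_smul, negLam_negLam] at h2
  rw [mul_comm j i, h2, smul_neg, neg_neg, smul_smul, sgn_mul_sgn, add_self_zmod2,
    sgn_zero, one_smul]

lemma SP_add {i j : ZMod 2} {a b b' : V} (h : SP B i j a b) (h' : SP B i j a b') :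
    SP B i j a (b + b') := by
  unfold SP at *
  rw [B.add_right, B.add_left, negLam_add, h, h', smul_add, neg_add]

lemma SP_zero (i j : ZMod 2) (a : V) : SP B i j a 0 := by
  unfold SP
  rw [br_zero_right, br_zero_left, negLam_zero, smul_zero, neg_zero]

lemma SP_smul {i j : ZMod 2} {a b : V} (c : ℂ) (h : SP B i j a b) : SP B i j a (c • b) := by
  unfold SP at *
  rw [B.smul_right, B.smul_left, negLam_smul, h, smul_neg, smul_comm]

lemma SP_D {i j : ZMod 2} {a b : V} (h : SP B i j a b) : SP B i j a (DD b) := by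
  unfold SP at *
  rw [B.sesq_right, B.sesq_left, h, negLam_neg, negLam_X_mul, neg_neg,
    mul_neg, mul_smul_comm, Dp_neg, Dp_smul, ← neg_add, ← smul_add]

lemma SP_one {i : ZMod 2} {a : V} (ha : a ∈ G i) : SP B i 0 a 1 := by
  unfold SP
  rw [br_one_right B ha, br_one_left B ha, negLam_zero, smul_zero, neg_zero]

lemma SP_algebraMap {i : ZMod 2} {a : V} (ha : a ∈ G i) (r : ℂ) :
    SP B i 0 a ((algebraMap ℂ V) r) := by
  rw [Algebra.algebraMap_eq_smul_one]
  exact SP_smul B r (SP_one B ha)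

lemma SP_mul {i j k : ZMod 2} {a b c : V} (ha : a ∈ G i) (hb : b ∈ G j) (hc : c ∈ G k)
    (hab : SP B i j a b) (hac : SP B i k a c) : SP B i (j + k) a (b * c) := by
  have h1 : B.br b a = -(PDO.sgn (j * i) • PDO.negLam (B.br a b)) := SP_symm B hab
  have h2 : B.br c a = -(PDO.sgn (k * i) • PDO.negLam (B.br a c)) := SP_symm B hac
  have t1 : PDO.negLam (PDO.lamShift (B.br b a) c) =
      -(PDO.sgn (j * i) • (B.br a b * C c)) := by
    rw [h1, lamShift_eq_LS, LS_neg_left, LS_smul_left, negLam_neg, negLam_smul,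
      negLam_LS_negLam]
  have t2 : PDO.negLam (PDO.lamShift (B.br c a) b) =
      -(PDO.sgn (k * i) • (B.br a c * C b)) := by
    rw [h2, lamShift_eq_LS, LS_neg_left, LS_smul_left, negLam_neg, negLam_smul,
      negLam_LS_negLam]
  have hR : PDO.negLam (B.br (b * c) a) =
      -((PDO.sgn (k * i) * PDO.sgn (j * i)) • (B.br a b * C c)) +
      -((PDO.sgn (j * (k + i)) * PDO.sgn (k * i)) • (B.br a c * C b)) := by
    rw [B.leibniz_right j k i b hb c hc a ha, negLam_add, negLam_smul, negLam_smul, t1, t2,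
      smul_neg, smul_neg, smul_smul, smul_smul]
  unfold SP
  rw [B.leibniz_left i j a ha b hb c, hR]
  rw [C_mul_comm_poly hb (B.br a c) (fun n => B.even i k a ha c hc n)]
  rw [smul_smul, sgn_mul_sgn (i * j) (j * (i + k))]
  rw [← neg_add, smul_neg, neg_neg, smul_add, smul_smul, smul_smul,
    sgn_mul_sgn (k * i) (j * i), sgn_mul_sgn (i * (j + k)) (k * i + j * i),
    sgn_mul_sgn (j * (k + i)) (k * i), sgn_mul_sgn (i * (j + k)) (j * (k + i) + k * i)]
  have e1 : ∀ x y z : ZMod 2, x * (y + z) + (z * x + y * x) = 0 := by decide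
  have e2 : ∀ x y z : ZMod 2, x * (y + z) + (y * (z + x) + z * x) = x * y + y * (x + z) := by
    decide
  rw [e1 i j k, e2 i j k, sgn_zero, one_smul]

end Bracket

end SkewAux
namespace SkewAux

open Polynomial PDO Finset

variable {V : Type*} [DiffSuperAlg V]

local notation "DD" => DiffSuperAlg.D (V := V)
local notation "G" => DiffSuperAlg.grading (V := V)

section Gpart

lemma gpart_mem (π : ZMod 2) (x : V) : gpart π x ∈ G π := by
  letI := DiffSuperAlg.gradedAlgebra (V := V)
  unfold PDO.gpart
  exact SetLike.coe_mem _

lemma gpart_add (π : ZMod 2) (x y : V) : gpart π (x + y) = gpart π x + gpart π y := by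
  letI := DiffSuperAlg.gradedAlgebra (V := V)
  unfold PDO.gpart
  rw [DirectSum.decompose_add]
  rfl

lemma gpart_same {π : ZMod 2} {x : V} (h : x ∈ G π) : gpart π x = x := by
  letI := DiffSuperAlg.gradedAlgebra (V := V)
  unfold PDO.gpart
  exact DirectSum.decompose_of_mem_same _ h

lemma gpart_ne {π σ : ZMod 2} {x : V} (h : x ∈ G π) (hne : π ≠ σ) : gpart σ x = 0 := by
  letI := DiffSuperAlg.gradedAlgebra (V := V)
  unfold PDO.gpart
  exact DirectSum.decompose_of_mem_ne _ h hne

lemma gpart_sum (x : V) : gpart 0 x + gpart 1 x = x := by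
  classical
  letI := DiffSuperAlg.gradedAlgebra (V := V)
  have h := DirectSum.sum_support_decompose (DiffSuperAlg.grading (V := V)) x
  have hsub : (DirectSum.decompose (DiffSuperAlg.grading (V := V)) x).support ⊆
      ({0, 1} : Finset (ZMod 2)) := by
    intro t _
    rcases zmod2_em t with rfl | rfl <;> simp
  have hzero : ∀ t ∈ ({0, 1} : Finset (ZMod 2)),
      t ∉ (DirectSum.decompose (DiffSuperAlg.grading (V := V)) x).support →
      ((DirectSum.decompose (DiffSuperAlg.grading (V := V)) x t : V)) = 0 := by
    intro t _ ht
    rw [DFinsupp.notMem_support_iff.mp ht]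
    rfl
  calc gpart 0 x + gpart 1 x
      = ∑ t ∈ ({0, 1} : Finset (ZMod 2)),
          ((DirectSum.decompose (DiffSuperAlg.grading (V := V)) x t : V)) := by
        rw [Finset.sum_insert (by decide), Finset.sum_singleton]
        rfl
    _ = ∑ t ∈ (DirectSum.decompose (DiffSuperAlg.grading (V := V)) x).support,
          ((DirectSum.decompose (DiffSuperAlg.grading (V := V)) x t : V)) :=
        (Finset.sum_subset hsub hzero).symm
    _ = x := h

lemma gpart_mul (π : ZMod 2) (x y : V) :
    gpart π (x * y) = gpart 0 x * gpart π y + gpart 1 x * gpart (π + 1) y := by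
  letI := DiffSuperAlg.gradedAlgebra (V := V)
  have m00 : gpart (0 : ZMod 2) x * gpart (0 : ZMod 2) y ∈ G ((0 : ZMod 2) + 0) :=
    SetLike.mul_mem_graded (gpart_mem 0 x) (gpart_mem 0 y)
  have m01 : gpart (0 : ZMod 2) x * gpart (1 : ZMod 2) y ∈ G ((0 : ZMod 2) + 1) :=
    SetLike.mul_mem_graded (gpart_mem 0 x) (gpart_mem 1 y)
  have m10 : gpart (1 : ZMod 2) x * gpart (0 : ZMod 2) y ∈ G ((1 : ZMod 2) + 0) :=
    SetLike.mul_mem_graded (gpart_mem 1 x) (gpart_mem 0 y)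
  have m11 : gpart (1 : ZMod 2) x * gpart (1 : ZMod 2) y ∈ G ((1 : ZMod 2) + 1) :=
    SetLike.mul_mem_graded (gpart_mem 1 x) (gpart_mem 1 y)
  rw [show ((0 : ZMod 2) + 0) = 0 from rfl] at m00
  rw [show ((0 : ZMod 2) + 1) = 1 by decide] at m01
  rw [show ((1 : ZMod 2) + 0) = 1 by decide] at m10
  rw [show ((1 : ZMod 2) + 1) = 0 by decide] at m11
  have hexp : gpart π (x * y) =
      gpart π (gpart 0 x * gpart 0 y) + gpart π (gpart 0 x * gpart 1 y) +
      (gpart π (gpart 1 x * gpart 0 y) + gpart π (gpart 1 x * gpart 1 y)) := by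
    conv_lhs => rw [← gpart_sum x, ← gpart_sum y]
    rw [add_mul, mul_add, mul_add, gpart_add, gpart_add, gpart_add]
  rcases zmod2_em π with rfl | rfl
  · rw [hexp, gpart_same m00, gpart_ne m01 (by decide), gpart_ne m10 (by decide),
      gpart_same m11, show ((0 : ZMod 2) + 1) = 1 by decide]
    abel
  · rw [hexp, gpart_ne m00 (by decide), gpart_same m01, gpart_same m10,
      gpart_ne m11 (by decide), show ((1 : ZMod 2) + 1) = 0 by decide]
    abel

lemma gpart_D (π : ZMod 2) (x : V) : gpart π (DD x) = DD (gpart π x) := by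
  have h0 : DD (gpart 0 x) ∈ G (0 : ZMod 2) := DiffSuperAlg.D_even _ _ (gpart_mem 0 x)
  have h1 : DD (gpart 1 x) ∈ G (1 : ZMod 2) := DiffSuperAlg.D_even _ _ (gpart_mem 1 x)
  have hexp : gpart π (DD x) = gpart π (DD (gpart 0 x)) + gpart π (DD (gpart 1 x)) := by
    conv_lhs => rw [← gpart_sum x]
    rw [DiffSuperAlg.D_add, gpart_add]
  rcases zmod2_em π with rfl | rfl
  · rw [hexp, gpart_same h0, gpart_ne h1 (by decide), add_zero]
  · rw [hexp, gpart_ne h0 (by decide), gpart_same h1, zero_add]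

end Gpart

section Extend

variable (B : LambdaBracket V)

lemma extend_b {ι : Type*} (u : ι → V) (pu : ι → ZMod 2)
    (hu : ∀ t, u t ∈ G (pu t)) (hgen : PDO.diffGen (Set.range u))
    (i : ZMod 2) (a : V) (ha : a ∈ G i)
    (hg : ∀ t, SP B i (pu t) a (u t)) :
    ∀ b : V, ∀ j : ZMod 2, SP B i j a (PDO.gpart j b) := by
  intro b
  have hb : b ∈ Algebra.adjoin ℂ {x : V | ∃ v ∈ Set.range u, ∃ n : ℕ, x = PDO.Dit n v} := by
    rw [PDO.diffGen] at hgen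
    rw [hgen]
    trivial
  induction hb using Algebra.adjoin_induction with
  | mem x hx =>
      obtain ⟨v, ⟨t, rfl⟩, n, rfl⟩ := hx
      intro j
      have hsp : SP B i (pu t) a (PDO.Dit n (u t)) := by
        induction n with
        | zero => exact hg t
        | succ n ih =>
            rw [Dit_succ']
            exact SP_D B ih
      have hmem := Dit_mem n (pu t) (u t) (hu t)
      by_cases hj : j = pu t
      · subst hj
        rw [gpart_same hmem]
        exact hsp
      · rw [gpart_ne hmem (fun h => hj h.symm)]
        exact SP_zero B i j a
  | algebraMap r =>
      intro j
      have hmem : (algebraMap ℂ V) r ∈ G (0 : ZMod 2) := by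
        rw [Algebra.algebraMap_eq_smul_one]
        exact Submodule.smul_mem _ _ one_mem_G
      by_cases hj : j = 0
      · subst hj
        rw [gpart_same hmem]
        exact SP_algebraMap B ha r
      · rw [gpart_ne hmem (fun h => hj h.symm)]
        exact SP_zero B i j a
  | add x y hx hy ihx ihy =>
      intro j
      rw [gpart_add]
      exact SP_add B (ihx j) (ihy j)
  | mul x y hx hy ihx ihy =>
      intro j
      rw [gpart_mul]
      apply SP_add
      · have h := SP_mul B ha (gpart_mem 0 x) (gpart_mem j y) (ihx 0) (ihy j)
        rwa [zero_add] at h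
      · have h := SP_mul B ha (gpart_mem 1 x) (gpart_mem (j + 1) y) (ihx 1) (ihy (j + 1))
        have e : ∀ z : ZMod 2, (1 : ZMod 2) + (z + 1) = z := by decide
        rwa [e j] at h

end Extend

end SkewAux

/-- Let `V` be a differential superalgebra generated, as a differential
algebra, by a homogeneous family `u : ι → V`, and let `B` be a λ-bracket on `V`
(bilinear, sesquilinear, satisfying both Leibniz rules; cf. the master formula).
Then `B` satisfies the skew-symmetry axiom `{a_λ b} = -(-1)^(|a||b|){b_(-λ-∂) a}` for
all (homogeneous) `a, b ∈ V` if and only if it does so on all pairs of generators. -/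
theorem skew_symmetry_iff_on_generators (V : Type*) [DiffSuperAlg V]
    (B : LambdaBracket V) {ι : Type*} (u : ι → V) (pu : ι → ZMod 2)
    (hu : ∀ i, u i ∈ DiffSuperAlg.grading (V := V) (pu i))
    (hgen : PDO.diffGen (Set.range u)) :
    PDO.SkewSymm B ↔
      ∀ i j : ι, B.br (u i) (u j) =
        -(PDO.sgn (pu i * pu j) • PDO.negLam (B.br (u j) (u i))) := by
  constructor
  · intro h i j
    exact h (pu i) (pu j) (u i) (hu i) (u j) (hu j)
  · intro hyp i j a ha b hb
    have stepA : ∀ t : ι, ∀ (j' : ZMod 2) (b' : V),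
        b' ∈ DiffSuperAlg.grading (V := V) j' → SkewAux.SP B (pu t) j' (u t) b' := by
      intro t j' b' hb'
      have h := SkewAux.extend_b B u pu hu hgen (pu t) (u t) (hu t)
        (fun t' => hyp t t') b' j'
      rwa [SkewAux.gpart_same hb'] at h
    have hgB : ∀ t, SkewAux.SP B j (pu t) b (u t) :=
      fun t => SkewAux.SP_symm B (stepA t j b hb)
    have hB := SkewAux.extend_b B u pu hu hgen j b hb hgB a i
    rw [SkewAux.gpart_same ha] at hB
    exact SkewAux.SP_symm B hB
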